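/- Let (X,d) be a proper geodesic metric space and let f, g : X → X be 1-Lipschitz maps with f∘g = g∘f. Suppose there is x₀ ∈ X with d(x₀, f^m(x₀)) → ∞ and d(x₀, g^n(x₀)) → ∞, and suppose there is a nonempty compact set K ⊆ X such that for every m ∈ ℕ there exists n ∈ ℕ with K ∩ (f^m ∘ g^n)(K) ≠ ∅. Then there exist a nonempty closed set M ⊆ X and a 1-Lipschitz map ρ : X → X such that: ρ∘ρ = ρ and the range of ρ equals M; ρ∘f = f∘ρ and ρ∘g = g∘ρ; f(M) = M and g(M) = M; the restrictions of f and g to M are surjective isometries of M (d(f(x),f(y)) = d(x,y) and d(g(x),g(y)) = d(x,y) for all x,y ∈ M); and M is totally geodesic: any two points of M are joined by a geodesic segment of X whose image is contained in M. -/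

import Mathlib

open Set Filter
open Topology

attribute [local instance] Ultrafilter.add Ultrafilter.addSemigroup

/-- A geodesic segment in a metric space: a map `γ` which is an isometry from `[a,b] ⊆ ℝ`. -/
def IsGeodesicSegment {X : Type*} [MetricSpace X] (γ : ℝ → X) (a b : ℝ) : Prop :=
  a ≤ b ∧ ∀ s ∈ Set.Icc a b, ∀ t ∈ Set.Icc a b, dist (γ s) (γ t) = |s - t|

set_option maxHeartbeats 2000000

/-- (Theorem 1.6, abstract retract form.)  In a proper geodesic metric space,
if `f, g` are commuting 1-Lipschitz maps whose orbits escape to infinity and some nonempty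
compact `K` satisfies: for every `m` there is `n` with `K ∩ f^m(g^n(K)) ≠ ∅`, then there are a
nonempty closed totally geodesic set `M` and a 1-Lipschitz retraction `ρ` onto `M` commuting
with `f` and `g`, with `f(M) = M = g(M)` and `f|_M`, `g|_M` surjective isometries of `M`. -/
theorem commuting_lipschitz_retract {X : Type*} [MetricSpace X] [ProperSpace X]
    (hgeo : ∀ x y : X, ∃ (γ : ℝ → X) (a b : ℝ),
      IsGeodesicSegment γ a b ∧ γ a = x ∧ γ b = y)
    (f g : X → X) (hf : LipschitzWith 1 f) (hg : LipschitzWith 1 g)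
    (hcomm : f ∘ g = g ∘ f)
    (x₀ : X)
    (hfdiv : Tendsto (fun m : ℕ => dist x₀ (f^[m] x₀)) atTop atTop)
    (hgdiv : Tendsto (fun n : ℕ => dist x₀ (g^[n] x₀)) atTop atTop)
    (K : Set X) (hK : IsCompact K) (hKne : K.Nonempty)
    (hreturn : ∀ m : ℕ, ∃ n : ℕ, (K ∩ (f^[m] ∘ g^[n]) '' K).Nonempty) :
    ∃ (M : Set X) (ρ : X → X),
      M.Nonempty ∧ IsClosed M ∧
      LipschitzWith 1 ρ ∧
      ρ ∘ ρ = ρ ∧ Set.range ρ = M ∧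
      ρ ∘ f = f ∘ ρ ∧ ρ ∘ g = g ∘ ρ ∧
      f '' M = M ∧ g '' M = M ∧
      (∀ x ∈ M, ∀ y ∈ M, dist (f x) (f y) = dist x y) ∧
      (∀ x ∈ M, ∀ y ∈ M, dist (g x) (g y) = dist x y) ∧
      (∀ x ∈ M, ∀ y ∈ M, ∃ (γ : ℝ → X) (a b : ℝ),
        IsGeodesicSegment γ a b ∧ γ a = x ∧ γ b = y ∧
        ∀ t ∈ Set.Icc a b, γ t ∈ M) := by
  classical
  -- ## Part 0 : basic commutation and Lipschitz facts
  have hc : Function.Commute f g := fun x => congrFun hcomm x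
  set T : ℕ × ℕ → X → X := fun s x => f^[s.1] (g^[s.2] x) with hTdef
  have hcfg : ∀ (p q : ℕ) (w : X), f^[p] (g^[q] w) = g^[q] (f^[p] w) :=
    fun p q w => ((hc.iterate_left p).iterate_right q) w
  have T_add : ∀ (s t : ℕ × ℕ) (x : X), T (s + t) x = T s (T t x) := by
    intro s t x
    show f^[s.1 + t.1] (g^[s.2 + t.2] x) = f^[s.1] (g^[s.2] (f^[t.1] (g^[t.2] x)))
    rw [Function.iterate_add_apply, Function.iterate_add_apply g, ← hcfg t.1 s.2]
  have T_lip : ∀ s : ℕ × ℕ, LipschitzWith 1 (T s) := by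
    intro s
    have h := (hf.iterate s.1).comp (hg.iterate s.2)
    exact (by simpa using h : LipschitzWith 1 (f^[s.1] ∘ g^[s.2]))
  have Tdist : ∀ (s : ℕ × ℕ) (x y : X), dist (T s x) (T s y) ≤ dist x y := by
    intro s x y; simpa using (T_lip s).dist_le_mul x y
  have gdist : ∀ (q : ℕ) (x y : X), dist (g^[q] x) (g^[q] y) ≤ dist x y := by
    intro q x y; simpa using ((hg.iterate q).dist_le_mul x y)
  have fdist : ∀ (x y : X), dist (f x) (f y) ≤ dist x y := by
    intro x y; simpa using hf.dist_le_mul x y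
  -- ## Part 1 : radius of K and return data
  obtain ⟨r0, hr0⟩ := hK.isBounded.subset_closedBall x₀
  set r := max r0 0 with hrdef
  have hr : ∀ y ∈ K, dist y x₀ ≤ r := fun y hy =>
    le_trans (Metric.mem_closedBall.mp (hr0 hy)) (le_max_left _ _)
  have hrpos : (0:ℝ) ≤ r := le_max_right _ _
  have hKK : ∀ y ∈ K, ∀ z ∈ K, dist y z ≤ 2 * r := by
    intro y hy z hz
    have h := dist_triangle_right y z x₀
    have h1 := hr y hy; have h2 := hr z hz
    linarith
  have hret : ∀ m : ℕ, ∃ nm : ℕ, ∃ kk : X, kk ∈ K ∧ f^[m] (g^[nm] kk) ∈ K := by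
    intro m
    obtain ⟨nm, y, hy⟩ := hreturn m
    obtain ⟨kk, hkk, hky⟩ := hy.2
    exact ⟨nm, kk, hkk, by
      rw [show f^[m] (g^[nm] kk) = (f^[m] ∘ g^[nm]) kk from rfl, hky]; exact hy.1⟩
  choose n k hkK hfk using hret
  -- ## Part 2 : displacement of powers of g
  set E : ℕ → ℝ := fun q => dist x₀ (g^[q] x₀) with hEdef
  have hE0 : E 0 = 0 := by simp [hEdef]
  have hE1nonneg : (0:ℝ) ≤ E 1 := dist_nonneg
  have hE_le : ∀ q : ℕ, E q ≤ (q : ℝ) * E 1 := by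
    intro q
    induction q with
    | zero => simp [hE0]
    | succ q ih =>
      have h1 : g^[q + 1] x₀ = g^[q] (g x₀) := Function.iterate_succ_apply g q x₀
      have h2 : E (q + 1) ≤ E q + E 1 := by
        have ht : dist x₀ (g^[q] (g x₀)) ≤ dist x₀ (g^[q] x₀) + dist (g^[q] x₀) (g^[q] (g x₀)) :=
          dist_triangle _ _ _
        have hl : dist (g^[q] x₀) (g^[q] (g x₀)) ≤ dist x₀ (g x₀) := gdist q _ _
        have hE1 : E 1 = dist x₀ (g x₀) := by simp [hEdef]
        calc E (q + 1) = dist x₀ (g^[q] (g x₀)) := by rw [hEdef]; simp only []; rw [h1]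
          _ ≤ dist x₀ (g^[q] x₀) + dist (g^[q] x₀) (g^[q] (g x₀)) := ht
          _ ≤ E q + E 1 := by rw [hE1]; exact add_le_add le_rfl hl
      have : ((q:ℝ) + 1) * E 1 = (q:ℝ) * E 1 + E 1 := by ring
      push_cast
      linarith
  have hgdisp : ∀ (q : ℕ) (z : X), dist (g^[q] z) z ≤ 2 * dist z x₀ + E q := by
    intro q z
    have h := dist_triangle4 (g^[q] z) (g^[q] x₀) x₀ z
    have h1 : dist (g^[q] z) (g^[q] x₀) ≤ dist z x₀ := gdist q _ _
    have h2 : dist (g^[q] x₀) x₀ = E q := dist_comm x₀ (g^[q] x₀) ▸ rfl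
    have h3 : dist x₀ z = dist z x₀ := dist_comm _ _
    linarith [h, h1, h2.le, h2.ge]
  have hEup : ∀ (q : ℕ) (z : X), E q ≤ 2 * dist z x₀ + dist (g^[q] z) z := by
    intro q z
    have h := dist_triangle4 x₀ z (g^[q] z) (g^[q] x₀)
    have h1 : dist (g^[q] z) (g^[q] x₀) ≤ dist z x₀ := gdist q _ _
    have h2 : dist x₀ z = dist z x₀ := dist_comm _ _
    have h3 : dist z (g^[q] z) = dist (g^[q] z) z := dist_comm _ _
    have h4 : E q = dist x₀ (g^[q] x₀) := rfl
    linarith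
  -- ## Part 3 : the defect of `n` is bounded
  have hdef : ∀ m m' : ℕ, E (n m + n m' - n (m + m')) ≤ 16 * r ∧
      E (n (m + m') - (n m + n m')) ≤ 16 * r := by
    intro m m'
    set a := m + m' with hadef
    set P : X := f^[a] (g^[n m + n m'] (k a)) with hPdef
    set y : X := f^[a] (g^[n a] (k a)) with hydef
    have hyK : y ∈ K := hfk a
    have hPsplit : P = T (m, n m) (T (m', n m') (k a)) := by
      have h := T_add (m, n m) (m', n m') (k a)
      simpa [hPdef, Prod.mk_add_mk] using h
    have hP1 : dist P (T (m, n m) (k m)) ≤ 4 * r := by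
      have h1 : dist P (T (m, n m) (k m)) ≤ dist (T (m', n m') (k a)) (k m) := by
        rw [hPsplit]; exact Tdist _ _ _
      have h2 : dist (T (m', n m') (k a)) (k m) ≤
          dist (T (m', n m') (k a)) (T (m', n m') (k m')) + dist (T (m', n m') (k m')) (k m) :=
        dist_triangle _ _ _
      have h3 : dist (T (m', n m') (k a)) (T (m', n m') (k m')) ≤ dist (k a) (k m') :=
        Tdist _ _ _
      have h4 : dist (k a) (k m') ≤ 2 * r := hKK _ (hkK a) _ (hkK m')
      have h5 : dist (T (m', n m') (k m')) (k m) ≤ 2 * r := hKK _ (hfk m') _ (hkK m)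
      linarith
    have hPx : dist P x₀ ≤ 5 * r := by
      have h1 := dist_triangle P (T (m, n m) (k m)) x₀
      have h2 : dist (T (m, n m) (k m)) x₀ ≤ r := hr _ (hfk m)
      linarith
    have hyx : dist y x₀ ≤ r := hr _ hyK
    constructor
    · rcases le_or_gt (n a) (n m + n m') with h | h
      · set q := n m + n m' - n a with hqdef
        have hq : q + n a = n m + n m' := by omega
        have hgy : g^[q] y = P := by
          rw [hydef, ← hcfg a q, ← Function.iterate_add_apply g q (n a), hq]
        have h1 : E q ≤ 2 * dist y x₀ + dist (g^[q] y) y := hEup q y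
        have h2 : dist (g^[q] y) y ≤ dist P x₀ + dist x₀ y := by
          rw [hgy]; exact dist_triangle _ _ _
        have h3 : dist x₀ y = dist y x₀ := dist_comm _ _
        linarith
      · have hq0 : n m + n m' - n a = 0 := by omega
        rw [hq0, hE0]; linarith
    · rcases le_or_gt (n m + n m') (n a) with h | h
      · set q := n a - (n m + n m') with hqdef
        have hq : q + (n m + n m') = n a := by omega
        have hgy : g^[q] P = y := by
          rw [hPdef, hydef, ← hcfg a q, ← Function.iterate_add_apply g q (n m + n m'), hq]
        have h1 : E q ≤ 2 * dist P x₀ + dist (g^[q] P) P := hEup q P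
        have h2 : dist (g^[q] P) P ≤ dist y x₀ + dist x₀ P := by
          rw [hgy]; exact dist_triangle _ _ _
        have h3 : dist x₀ P = dist P x₀ := dist_comm _ _
        linarith
      · have hq0 : n a - (n m + n m') = 0 := by omega
        rw [hq0, hE0]; linarith
  -- a uniform bound for the defect as a natural number
  obtain ⟨q₀, hq₀⟩ : ∃ q₀ : ℕ, ∀ j : ℕ, E j ≤ 16 * r → j ≤ q₀ := by
    obtain ⟨N, hN⟩ := eventually_atTop.mp (hgdiv.eventually_gt_atTop (16 * r))
    exact ⟨N, fun j hj => by
      by_contra hcon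
      push_neg at hcon
      exact absurd (hN j (le_of_lt hcon)) (not_lt.mpr hj)⟩
  set Q : ℝ := (q₀ : ℝ) with hQdef
  have hQ0 : (0:ℝ) ≤ Q := Nat.cast_nonneg _
  have hndef : ∀ m m' : ℕ, ((n (m + m') : ℝ) ≤ n m + n m' + Q) ∧
      ((n m : ℝ) + n m' ≤ n (m + m') + Q) := by
    intro m m'
    have h1 := hq₀ _ (hdef m m').1
    have h2 := hq₀ _ (hdef m m').2
    constructor
    · have h3 : n (m + m') ≤ n m + n m' + q₀ := by omega
      rw [hQdef]
      exact_mod_cast h3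
    · have h3 : n m + n m' ≤ n (m + m') + q₀ := by omega
      rw [hQdef]
      exact_mod_cast h3
  -- ## Part 4 : the linear growth rate α of n
  set u : ℕ → ℝ := fun m => (n m : ℝ) + Q with hudef
  have hu : Subadditive u := by
    intro m m'
    have h := (hndef m m').1
    simp only [hudef]
    linarith
  have hubdd : BddBelow (Set.range fun m : ℕ => u m / m) := by
    refine ⟨0, ?_⟩
    rintro x ⟨m, rfl⟩
    have h1 : (0:ℝ) ≤ u m := by positivity
    positivity
  set w : ℕ → ℝ := fun m => Q - (n m : ℝ) with hwdef
  have hw : Subadditive w := by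
    intro m m'
    have h := (hndef m m').2
    simp only [hwdef]
    linarith
  have hngrow : ∀ m : ℕ, (n m : ℝ) ≤ n 0 + m * ((n 1 : ℝ) + Q) := by
    intro m
    induction m with
    | zero => simp
    | succ m ih =>
      have h := (hndef m 1).1
      push_cast at h ⊢
      nlinarith [(Nat.cast_nonneg (n 1) : (0:ℝ) ≤ (n 1 : ℝ)), hQ0]
  have hwbdd : BddBelow (Set.range fun m : ℕ => w m / m) := by
    refine ⟨-((n 0 : ℝ) + (n 1 : ℝ) + Q), ?_⟩
    rintro x ⟨m, rfl⟩
    rcases Nat.eq_zero_or_pos m with hm | hm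
    · subst hm
      simp only [Nat.cast_zero, div_zero]
      have h0 : (0:ℝ) ≤ (n 0 : ℝ) := Nat.cast_nonneg _
      have h1 : (0:ℝ) ≤ (n 1 : ℝ) := Nat.cast_nonneg _
      linarith
    · have hm' : (0:ℝ) < m := by exact_mod_cast hm
      have hm1 : (1:ℝ) ≤ m := by exact_mod_cast hm
      rw [le_div_iff₀ hm']
      have h1 := hngrow m
      have h0 : (0:ℝ) ≤ (n 0 : ℝ) := Nat.cast_nonneg _
      have h2 : (0:ℝ) ≤ (n 1 : ℝ) := Nat.cast_nonneg _
      simp only [hwdef]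
      nlinarith [mul_nonneg (sub_nonneg.mpr hm1) h0]
  set α : ℝ := hu.lim with hαdef
  have hαlim := hu.tendsto_lim hubdd
  have hwlim := hw.tendsto_lim hwbdd
  have hkey : α + hw.lim = 0 := by
    have h1 : Tendsto (fun m : ℕ => u m / m + w m / m) atTop (𝓝 (α + hw.lim)) :=
      hαlim.add hwlim
    have h2 : (fun m : ℕ => u m / m + w m / m) = fun m : ℕ => (2 * Q) / m := by
      funext m
      rw [← add_div]
      congr 1
      simp only [hudef, hwdef]; ring
    rw [h2] at h1
    exact tendsto_nhds_unique h1 (tendsto_const_div_atTop_nhds_zero_nat (2 * Q))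
  have hub : ∀ m : ℕ, 1 ≤ m → (n m : ℝ) ≤ α * m + Q := by
    intro m hm
    have h := hw.lim_le_div hwbdd (show m ≠ 0 by omega)
    have hm' : (0:ℝ) < m := by exact_mod_cast hm
    have h2 : -α ≤ (Q - (n m : ℝ)) / m := by
      have : hw.lim = -α := by linarith
      rw [← this]; exact h
    rw [le_div_iff₀ hm'] at h2
    nlinarith
  have hlb : ∀ m : ℕ, 1 ≤ m → α * m - Q ≤ (n m : ℝ) := by
    intro m hm
    have h := hu.lim_le_div hubdd (show m ≠ 0 by omega)
    have hm' : (0:ℝ) < m := by exact_mod_cast hm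
    rw [le_div_iff₀ hm'] at h
    simp only [hudef] at h
    nlinarith
  -- D m ≤ 2r + E (n m)
  have hDE : ∀ m : ℕ, dist x₀ (f^[m] x₀) ≤ 2 * r + E (n m) := by
    intro m
    have h := dist_triangle4 x₀ (T (m, n m) (k m)) (T (m, n m) x₀) (f^[m] x₀)
    have h1 : dist x₀ (T (m, n m) (k m)) ≤ r := by
      rw [dist_comm]; exact hr _ (hfk m)
    have h2 : dist (T (m, n m) (k m)) (T (m, n m) x₀) ≤ dist (k m) x₀ := Tdist _ _ _
    have h2' : dist (k m) x₀ ≤ r := hr _ (hkK m)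
    have h3 : dist (T (m, n m) x₀) (f^[m] x₀) ≤ E (n m) := by
      show dist (f^[m] (g^[n m] x₀)) (f^[m] x₀) ≤ E (n m)
      have hfl : ∀ (p : ℕ) (x y : X), dist (f^[p] x) (f^[p] y) ≤ dist x y := by
        intro p x y; simpa using ((hf.iterate p).dist_le_mul x y)
      calc dist (f^[m] (g^[n m] x₀)) (f^[m] x₀) ≤ dist (g^[n m] x₀) x₀ := hfl m _ _
        _ = E (n m) := dist_comm _ _
    linarith
  have hαpos : (0:ℝ) < α := by
    by_contra hneg
    push_neg at hneg
    obtain ⟨m, hm⟩ := ((hfdiv.eventually_gt_atTop (2 * r + Q * E 1)).and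
      (eventually_ge_atTop 1)).exists
    have hDm := hDE m
    have hnm : (n m : ℝ) ≤ Q := by
      have h := hub m hm.2
      nlinarith [(Nat.cast_nonneg m : (0:ℝ) ≤ (m : ℝ))]
    have hEnm : E (n m) ≤ Q * E 1 :=
      le_trans (hE_le (n m)) (mul_le_mul_of_nonneg_right hnm hE1nonneg)
    have := hm.1
    linarith
  set Q' : ℝ := Q + (n 0 : ℝ) with hQ'def
  have hQ'0 : (0:ℝ) ≤ Q' := by positivity
  have hslope : ∀ a : ℕ, |(n a : ℝ) - α * a| ≤ Q' := by
    intro a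
    rcases Nat.eq_zero_or_pos a with ha | ha
    · subst ha
      simp only [Nat.cast_zero, mul_zero, sub_zero]
      rw [abs_of_nonneg (Nat.cast_nonneg _)]
      simp only [hQ'def]; linarith
    · have h1 := hub a ha
      have h2 := hlb a ha
      rw [abs_le]
      have h0 : (0:ℝ) ≤ (n 0 : ℝ) := Nat.cast_nonneg _
      constructor
      · simp only [hQ'def]; linarith
      · simp only [hQ'def]; linarith
  -- ## Part 5 : Bolzano–Weierstrass on the bounded error e
  set e : ℕ → ℝ := fun m => (n m : ℝ) - α * m with hedef
  have hebound : ∀ i : ℕ, e (i + 1) ∈ Set.Icc (-Q) Q := by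
    intro i
    have h1 := hub (i + 1) (by omega)
    have h2 := hlb (i + 1) (by omega)
    constructor
    · simp only [hedef]; linarith
    · simp only [hedef]; linarith
  obtain ⟨L, hL, φ, hφmono, hφtend⟩ :=
    (isCompact_Icc : IsCompact (Set.Icc (-Q) Q)).tendsto_subseq hebound
  -- choice of the "difference word" building blocks
  set c : ℕ := max 1 ⌈2 / α⌉₊ with hcdef
  have hc1 : 1 ≤ c := le_max_left _ _
  have hcα : (2:ℝ) ≤ α * c := by
    have h1 : (2 / α : ℝ) ≤ (⌈2 / α⌉₊ : ℝ) := Nat.le_ceil _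
    have h2 : ((⌈2 / α⌉₊ : ℕ) : ℝ) ≤ (c : ℝ) := by exact_mod_cast le_max_right 1 ⌈2 / α⌉₊
    have h3 : (2 / α : ℝ) ≤ c := le_trans h1 h2
    rw [div_le_iff₀ hαpos] at h3
    linarith [h3]
  have hpow1 : ∀ j : ℕ, ((2:ℝ)⁻¹) ^ j ≤ 1 := fun j => pow_le_one₀ (by norm_num) (by norm_num)
  have hpair : ∀ j : ℕ, ∃ p : ℕ × ℕ, 1 ≤ p.1 ∧ 1 ≤ p.2 ∧
      |(p.2 : ℝ) - α * p.1| ≤ ((2:ℝ)⁻¹) ^ (j + 2) := by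
    intro j
    have hε : (0:ℝ) < ((2:ℝ)⁻¹) ^ (j + 3) := by positivity
    obtain ⟨I, hI⟩ := Metric.tendsto_atTop.mp hφtend (((2:ℝ)⁻¹) ^ (j + 3)) hε
    simp only [Function.comp_apply] at hI
    set i₂ := max I (φ I + c) with hi₂def
    have hi₂I : I ≤ i₂ := le_max_left _ _
    have hφi₂ : φ I + c ≤ φ i₂ := le_trans (le_max_right _ _) hφmono.le_apply
    set m₁ := φ I + 1 with hm₁def
    set m₂ := φ i₂ + 1 with hm₂def
    set μ := φ i₂ - φ I with hμdef
    have hμc : c ≤ μ := by omega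
    have hμcast : (μ : ℝ) = (φ i₂ : ℝ) - (φ I : ℝ) := by
      have : φ I ≤ φ i₂ := by omega
      rw [hμdef, Nat.cast_sub this]
    have h1 : dist (e m₁) L < ((2:ℝ)⁻¹) ^ (j + 3) := hI I le_rfl
    have h2 : dist (e m₂) L < ((2:ℝ)⁻¹) ^ (j + 3) := hI i₂ hi₂I
    have hee : |e m₂ - e m₁| ≤ 2 * ((2:ℝ)⁻¹) ^ (j + 3) := by
      rw [Real.dist_eq] at h1 h2
      rw [show e m₂ - e m₁ = (e m₂ - L) - (e m₁ - L) by ring]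
      calc |(e m₂ - L) - (e m₁ - L)| ≤ |e m₂ - L| + |e m₁ - L| := abs_sub _ _
        _ ≤ 2 * ((2:ℝ)⁻¹) ^ (j + 3) := by linarith
    have h2e : 2 * ((2:ℝ)⁻¹) ^ (j + 3) = ((2:ℝ)⁻¹) ^ (j + 2) := by ring
    have hnd : (n m₂ : ℝ) - (n m₁ : ℝ) = α * μ + (e m₂ - e m₁) := by
      simp only [hedef]
      rw [hμcast]
      push_cast [hm₁def, hm₂def]
      ring
    have hαμ : (2:ℝ) ≤ α * μ := by
      have hcμ : (c : ℝ) ≤ (μ : ℝ) := by exact_mod_cast hμc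
      have h := mul_le_mul_of_nonneg_left hcμ hαpos.le
      linarith
    have hνr : (1:ℝ) ≤ (n m₂ : ℝ) - (n m₁ : ℝ) := by
      rw [hnd]
      have hee1 : |e m₂ - e m₁| ≤ 1 := by
        rw [h2e] at hee
        exact le_trans hee (hpow1 (j + 2))
      have := abs_le.mp hee1
      linarith
    have hn12 : n m₁ ≤ n m₂ := by
      by_contra hcon
      push_neg at hcon
      have : (n m₂ : ℝ) < (n m₁ : ℝ) := by exact_mod_cast hcon
      linarith
    refine ⟨(μ, n m₂ - n m₁), by simpa using le_trans hc1 hμc, ?_, ?_⟩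
    · show 1 ≤ n m₂ - n m₁
      have : (1:ℝ) ≤ ((n m₂ - n m₁ : ℕ) : ℝ) := by
        rw [Nat.cast_sub hn12]; linarith
      exact_mod_cast this
    · show |((n m₂ - n m₁ : ℕ) : ℝ) - α * μ| ≤ ((2:ℝ)⁻¹) ^ (j + 2)
      rw [Nat.cast_sub hn12, hnd]
      rw [show α * ↑μ + (e m₂ - e m₁) - α * ↑μ = e m₂ - e m₁ by ring]
      rw [← h2e]
      exact hee
  choose A hA1 hA2 hA3 using hpair
  -- ## Part 6 : the FS-invariant
  have hdrop_head : ∀ J : ℕ, (Stream'.drop J A).head = A J := fun J => Stream'.head_drop A J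
  have hdrop_tail : ∀ J : ℕ, (Stream'.drop J A).tail = Stream'.drop (J + 1) A := fun J =>
    Stream'.tail_drop' (i := J) (s := A)
  have hpowmono : ∀ t : ℕ, ((2:ℝ)⁻¹) ^ (t + 1) ≤ ((2:ℝ)⁻¹) ^ t := fun t =>
    pow_le_pow_of_le_one (by norm_num) (by norm_num) (by omega)
  have hkeyFS : ∀ (b : Stream' (ℕ × ℕ)) (s : ℕ × ℕ), s ∈ Hindman.FS b →
      ∀ J : ℕ, b = Stream'.drop J A →
      1 ≤ s.1 ∧ 1 ≤ s.2 ∧ |(s.2 : ℝ) - α * s.1| ≤ 2 * ((2:ℝ)⁻¹) ^ (J + 2) := by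
    intro b s hs
    induction hs with
    | head' a =>
      intro J hJ
      have hh : a.head = A J := by rw [hJ]; exact hdrop_head J
      rw [hh]
      refine ⟨hA1 J, hA2 J, le_trans (hA3 J) ?_⟩
      have hp : (0:ℝ) ≤ ((2:ℝ)⁻¹) ^ (J + 2) := by positivity
      linarith
    | tail' a m h ih =>
      intro J hJ
      have hIH := ih (J + 1) (by rw [hJ]; exact hdrop_tail J)
      refine ⟨hIH.1, hIH.2.1, le_trans hIH.2.2 ?_⟩
      have := hpowmono (J + 2)
      linarith
    | cons' a m h ih =>
      intro J hJ
      obtain ⟨h1, h2, h3⟩ := ih (J + 1) (by rw [hJ]; exact hdrop_tail J)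
      have hh : a.head = A J := by rw [hJ]; exact hdrop_head J
      rw [hh]
      refine ⟨by simp; omega, by simp; omega, ?_⟩
      have hsum : ((A J + m).2 : ℝ) - α * ((A J + m).1 : ℝ) =
          (((A J).2 : ℝ) - α * (A J).1) + ((m.2 : ℝ) - α * m.1) := by
        simp only [Prod.fst_add, Prod.snd_add]
        push_cast
        ring
      rw [hsum]
      calc |(((A J).2 : ℝ) - α * (A J).1) + ((m.2 : ℝ) - α * m.1)|
          ≤ |((A J).2 : ℝ) - α * (A J).1| + |(m.2 : ℝ) - α * m.1| := abs_add_le _ _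
        _ ≤ ((2:ℝ)⁻¹) ^ (J + 2) + 2 * ((2:ℝ)⁻¹) ^ (J + 3) := add_le_add (hA3 J) h3
        _ = 2 * ((2:ℝ)⁻¹) ^ (J + 2) := by ring
  have hFS0 : ∀ s ∈ Hindman.FS A, 1 ≤ s.1 ∧ 1 ≤ s.2 ∧ |(s.2 : ℝ) - α * s.1| ≤ 1 := by
    intro s hs
    have h := hkeyFS A s hs 0 (Stream'.drop_zero).symm
    refine ⟨h.1, h.2.1, le_trans h.2.2 (by norm_num)⟩
  -- ## Part 7 : the idempotent ultrafilter
  obtain ⟨U, hUidem, hUFS⟩ := Hindman.exists_idempotent_ultrafilter_le_FS A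
  -- ## Part 8 : uniform boundedness of near-slope words
  have hW : ∀ (C : ℝ) (a b : ℕ), (0:ℝ) ≤ C → |(b : ℝ) - α * a| ≤ C →
      ∀ x : X, dist (f^[a] (g^[b] x)) x₀ ≤ dist x x₀ + (6 * r + (C + Q') * E 1) := by
    intro C a b hC hab x
    have hq : |(b : ℝ) - (n a : ℝ)| ≤ C + Q' := by
      have h1 := hslope a
      calc |(b : ℝ) - (n a : ℝ)| = |((b : ℝ) - α * a) + (α * a - (n a : ℝ))| := by ring_nf
        _ ≤ |(b : ℝ) - α * a| + |α * a - (n a : ℝ)| := abs_add_le _ _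
        _ ≤ C + Q' := by
            rw [abs_sub_comm (α * a) ((n a : ℝ))]
            exact add_le_add hab h1
    have hCQ'E : (0:ℝ) ≤ (C + Q') * E 1 := by positivity
    rcases le_or_gt (n a) b with h | h
    · set q := b - n a with hqdef2
      have hqcast : (q : ℝ) = (b : ℝ) - (n a : ℝ) := by
        rw [hqdef2, Nat.cast_sub h]
      have hqle : (q : ℝ) ≤ C + Q' := by
        rw [hqcast]; exact le_trans (le_abs_self _) hq
      have hTk : f^[a] (g^[b] (k a)) = g^[q] (f^[a] (g^[n a] (k a))) := by
        rw [← hcfg a q, ← Function.iterate_add_apply g q (n a),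
          (show q + n a = b by omega)]
      have hEq : E q ≤ (C + Q') * E 1 :=
        le_trans (hE_le q) (mul_le_mul_of_nonneg_right hqle hE1nonneg)
      have hy := hr _ (hfk a)
      have hdisp : dist (f^[a] (g^[b] (k a))) (k a) ≤ 4 * r + (C + Q') * E 1 := by
        have h1 : dist (g^[q] (f^[a] (g^[n a] (k a)))) (f^[a] (g^[n a] (k a))) ≤
            2 * r + E q := by
          have := hgdisp q (f^[a] (g^[n a] (k a)))
          linarith
        have h2 : dist (f^[a] (g^[n a] (k a))) (k a) ≤ 2 * r := hKK _ (hfk a) _ (hkK a)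
        calc dist (f^[a] (g^[b] (k a))) (k a)
            ≤ dist (f^[a] (g^[b] (k a))) (f^[a] (g^[n a] (k a))) +
              dist (f^[a] (g^[n a] (k a))) (k a) := dist_triangle _ _ _
          _ ≤ (2 * r + E q) + 2 * r := by
              rw [hTk]
              exact add_le_add h1 h2
          _ ≤ 4 * r + (C + Q') * E 1 := by linarith
      have htr := dist_triangle4 (f^[a] (g^[b] x)) (f^[a] (g^[b] (k a))) (k a) x₀
      have hl : dist (f^[a] (g^[b] x)) (f^[a] (g^[b] (k a))) ≤ dist x (k a) := Tdist (a, b) _ _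
      have hxk : dist x (k a) ≤ dist x x₀ + r := by
        have := dist_triangle x x₀ (k a)
        have h2 := hr _ (hkK a)
        rw [dist_comm x₀ (k a)] at this
        linarith
      have hka : dist (k a) x₀ ≤ r := hr _ (hkK a)
      linarith
    · set q := n a - b with hqdef2
      have hq1 : b + q = n a := by omega
      have hqle : (q : ℝ) ≤ C + Q' := by
        have hcast : (q : ℝ) = (n a : ℝ) - (b : ℝ) := by
          rw [hqdef2, Nat.cast_sub (by omega)]
        have : (q : ℝ) = -((b : ℝ) - (n a : ℝ)) := by rw [hcast]; ring
        rw [this]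
        exact le_trans (neg_le_abs _) hq
      have hTk : f^[a] (g^[b] (g^[q] (k a))) = f^[a] (g^[n a] (k a)) := by
        rw [← Function.iterate_add_apply g b q, hq1]
      have hEq : E q ≤ (C + Q') * E 1 :=
        le_trans (hE_le q) (mul_le_mul_of_nonneg_right hqle hE1nonneg)
      have hgq : dist (g^[q] (k a)) (k a) ≤ 2 * r + E q := by
        have := hgdisp q (k a)
        have h2 := hr _ (hkK a)
        linarith
      have htr := dist_triangle (f^[a] (g^[b] x)) (f^[a] (g^[b] (g^[q] (k a)))) x₀
      have hl : dist (f^[a] (g^[b] x)) (f^[a] (g^[b] (g^[q] (k a)))) ≤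
          dist x (g^[q] (k a)) := Tdist (a, b) _ _
      have hl2 : dist (f^[a] (g^[b] (g^[q] (k a)))) x₀ ≤ r := by
        rw [hTk]; exact hr _ (hfk a)
      have hxk : dist x (g^[q] (k a)) ≤ dist x x₀ + r + (2 * r + E q) := by
        have h4 := dist_triangle4 x x₀ (k a) (g^[q] (k a))
        have h5 := hr _ (hkK a)
        rw [dist_comm x₀ (k a)] at h4
        rw [dist_comm (k a) (g^[q] (k a))] at h4
        linarith
      linarith
  -- bounds for the three families of words we shall use
  set B1 : ℝ := 6 * r + (1 + Q') * E 1 with hB1def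
  set B2 : ℝ := 6 * r + ((1 + α) + Q') * E 1 with hB2def
  set B3 : ℝ := 6 * r + (2 + Q') * E 1 with hB3def
  have hBnd1 : ∀ s ∈ Hindman.FS A, ∀ x : X, dist (T s x) x₀ ≤ dist x x₀ + B1 := by
    intro s hs x
    exact hW 1 s.1 s.2 one_pos.le (hFS0 s hs).2.2 x
  have hBnd2 : ∀ s ∈ Hindman.FS A, ∀ x : X,
      dist (T (s.1 - 1, s.2) x) x₀ ≤ dist x x₀ + B2 := by
    intro s hs x
    obtain ⟨h1, h2, h3⟩ := hFS0 s hs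
    refine hW (1 + α) (s.1 - 1) s.2 (by linarith) ?_ x
    rw [Nat.cast_sub h1]
    push_cast
    have heq : (s.2 : ℝ) - α * ((s.1 : ℝ) - 1) = ((s.2 : ℝ) - α * s.1) + α := by
      push_cast; ring
    rw [heq]
    calc |((s.2 : ℝ) - α * s.1) + α| ≤ |(s.2 : ℝ) - α * s.1| + |α| := abs_add_le _ _
      _ ≤ 1 + α := by rw [abs_of_pos hαpos]; linarith
  have hBnd3 : ∀ s ∈ Hindman.FS A, ∀ x : X,
      dist (T (s.1, s.2 - 1) x) x₀ ≤ dist x x₀ + B3 := by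
    intro s hs x
    obtain ⟨h1, h2, h3⟩ := hFS0 s hs
    refine hW 2 s.1 (s.2 - 1) (by norm_num) ?_ x
    rw [Nat.cast_sub h2]
    push_cast
    have heq : ((s.2 : ℝ) - 1) - α * (s.1 : ℝ) = ((s.2 : ℝ) - α * s.1) + (-1) := by ring
    rw [heq]
    calc |((s.2 : ℝ) - α * s.1) + (-1)| ≤ |(s.2 : ℝ) - α * s.1| + |(-1 : ℝ)| := abs_add_le _ _
      _ ≤ 2 := by rw [abs_neg, abs_one]; linarith
  -- ## Part 9 : ultrafilter limits
  have hLim : ∀ (F : ℕ × ℕ → ℕ × ℕ) (B : ℝ),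
      (∀ s ∈ Hindman.FS A, ∀ x : X, dist (T (F s) x) x₀ ≤ dist x x₀ + B) →
      ∀ x : X, ∃ y : X, Tendsto (fun s => T (F s) x) (↑U) (𝓝 y) := by
    intro F B hB x
    have hmem : ∀ᶠ s in (↑U : Filter (ℕ × ℕ)),
        T (F s) x ∈ Metric.closedBall x₀ (dist x x₀ + B) := by
      filter_upwards [hUFS] with s hs
      exact Metric.mem_closedBall.mpr (hB s hs x)
    have hle : (↑(U.map fun s => T (F s) x) : Filter X) ≤
        𝓟 (Metric.closedBall x₀ (dist x x₀ + B)) := by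
      rw [le_principal_iff]
      exact hmem
    obtain ⟨y, -, hy⟩ := (isCompact_closedBall x₀ (dist x x₀ + B)).ultrafilter_le_nhds
      (U.map fun s => T (F s) x) hle
    exact ⟨y, hy⟩
  choose ρ hρ using hLim id B1 (fun s hs x => hBnd1 s hs x)
  choose uf huf using hLim (fun s => (s.1 - 1, s.2)) B2 hBnd2
  choose ug hug using hLim (fun s => (s.1, s.2 - 1)) B3 hBnd3
  simp only [id] at hρ
  -- ## Part 10 : properties of ρ
  have hρdist : ∀ x y : X, dist (ρ x) (ρ y) ≤ dist x y := by
    intro x y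
    have h1 : Tendsto (fun s => dist (T s x) (T s y)) (↑U) (𝓝 (dist (ρ x) (ρ y))) :=
      (hρ x).dist (hρ y)
    exact le_of_tendsto h1 (Eventually.of_forall fun s => Tdist s x y)
  have hρlip : LipschitzWith 1 ρ :=
    LipschitzWith.of_dist_le_mul fun x y => by
      rw [NNReal.coe_one, one_mul]; exact hρdist x y
  have hTf : ∀ (s : ℕ × ℕ) (x : X), T s (f x) = f (T s x) := by
    intro s x
    show f^[s.1] (g^[s.2] (f x)) = f (f^[s.1] (g^[s.2] x))
    rw [← (hc.iterate_right s.2) x, ← Function.iterate_succ_apply f s.1,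
      Function.iterate_succ_apply']
  have hTg : ∀ (s : ℕ × ℕ) (x : X), T s (g x) = g (T s x) := by
    intro s x
    show f^[s.1] (g^[s.2] (g x)) = g (f^[s.1] (g^[s.2] x))
    rw [← Function.iterate_succ_apply g s.2, Function.iterate_succ_apply' g s.2,
      (hc.iterate_left s.1) (g^[s.2] x)]
  have hρf : ∀ x : X, ρ (f x) = f (ρ x) := by
    intro x
    refine tendsto_nhds_unique (hρ (f x)) ?_
    have h2 : Tendsto (fun s => f (T s x)) (↑U) (𝓝 (f (ρ x))) :=
      (hf.continuous.tendsto (ρ x)).comp (hρ x)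
    exact h2.congr fun s => (hTf s x).symm
  have hρg : ∀ x : X, ρ (g x) = g (ρ x) := by
    intro x
    refine tendsto_nhds_unique (hρ (g x)) ?_
    have h2 : Tendsto (fun s => g (T s x)) (↑U) (𝓝 (g (ρ x))) :=
      (hg.continuous.tendsto (ρ x)).comp (hρ x)
    exact h2.congr fun s => (hTg s x).symm
  -- idempotency
  have hρρ : ∀ x : X, ρ (ρ x) = ρ x := by
    intro x
    refine tendsto_nhds_unique (hρ (ρ x)) ?_
    rw [Metric.tendsto_nhds]
    intro ε hε
    have hC : ∀ᶠ s in (↑(U + U) : Filter (ℕ × ℕ)), dist (T s x) (ρ x) < ε / 2 := by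
      rw [hUidem]
      exact Metric.tendsto_nhds.mp (hρ x) (ε / 2) (by linarith)
    rw [Ultrafilter.eventually_add] at hC
    filter_upwards [hC] with s hs
    have h2 : Tendsto (fun t => T (s + t) x) (↑U) (𝓝 (T s (ρ x))) := by
      have h := ((T_lip s).continuous.tendsto (ρ x)).comp (hρ x)
      exact h.congr fun t => (T_add s t x).symm
    have h3 : Tendsto (fun t => dist (T (s + t) x) (ρ x)) (↑U)
        (𝓝 (dist (T s (ρ x)) (ρ x))) := h2.dist tendsto_const_nhds
    have h4 : dist (T s (ρ x)) (ρ x) ≤ ε / 2 :=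
      le_of_tendsto h3 (hs.mono fun t ht => ht.le)
    linarith
  -- the fixed set
  have hfix : ∀ x : X, x ∈ Set.range ρ ↔ ρ x = x := by
    intro x
    constructor
    · rintro ⟨y, rfl⟩; exact hρρ y
    · intro h; exact ⟨x, h⟩
  have hMeq : Set.range ρ = {x | ρ x = x} := Set.ext fun x => hfix x
  -- the shifted limits recover ρ after applying f (resp. g)
  have hfu : ∀ x : X, f (uf x) = ρ x := by
    intro x
    refine tendsto_nhds_unique ?_ (hρ x)
    have h2 : Tendsto (fun s : ℕ × ℕ => f (T (s.1 - 1, s.2) x)) (↑U) (𝓝 (f (uf x))) :=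
      (hf.continuous.tendsto (uf x)).comp (huf x)
    refine Filter.Tendsto.congr' ?_ h2
    filter_upwards [hUFS] with s hs
    obtain ⟨h1, -, -⟩ := hFS0 s hs
    obtain ⟨p, hp⟩ : ∃ p, s.1 = p + 1 := ⟨s.1 - 1, by omega⟩
    show f (f^[s.1 - 1] (g^[s.2] x)) = f^[s.1] (g^[s.2] x)
    rw [hp]
    simp only [Nat.add_sub_cancel]
    rw [Function.iterate_succ_apply']
  have hgu : ∀ x : X, g (ug x) = ρ x := by
    intro x
    refine tendsto_nhds_unique ?_ (hρ x)
    have h2 : Tendsto (fun s : ℕ × ℕ => g (T (s.1, s.2 - 1) x)) (↑U) (𝓝 (g (ug x))) :=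
      (hg.continuous.tendsto (ug x)).comp (hug x)
    refine Filter.Tendsto.congr' ?_ h2
    filter_upwards [hUFS] with s hs
    obtain ⟨-, h2', -⟩ := hFS0 s hs
    obtain ⟨p, hp⟩ : ∃ p, s.2 = p + 1 := ⟨s.2 - 1, by omega⟩
    show g (f^[s.1] (g^[s.2 - 1] x)) = f^[s.1] (g^[s.2] x)
    rw [hp]
    simp only [Nat.add_sub_cancel]
    rw [Function.iterate_succ_apply' g p, (hc.iterate_left s.1) (g^[p] x)]
  -- ## Part 11 : assembly
  refine ⟨Set.range ρ, ρ, ⟨ρ x₀, x₀, rfl⟩, ?_, hρlip, funext fun x => hρρ x, rfl,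
    funext fun x => hρf x, funext fun x => hρg x, ?_, ?_, ?_, ?_, ?_⟩
  · -- IsClosed
    rw [hMeq]
    exact isClosed_eq hρlip.continuous continuous_id
  · -- f '' M = M
    apply Set.Subset.antisymm
    · rintro y ⟨x, ⟨z, rfl⟩, rfl⟩
      exact ⟨f z, hρf z⟩
    · intro x hx
      have hxfix : ρ x = x := (hfix x).mp hx
      refine ⟨ρ (uf x), ⟨uf x, rfl⟩, ?_⟩
      calc f (ρ (uf x)) = ρ (f (uf x)) := (hρf _).symm
        _ = ρ (ρ x) := by rw [hfu]
        _ = ρ x := hρρ x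
        _ = x := hxfix
  · -- g '' M = M
    apply Set.Subset.antisymm
    · rintro y ⟨x, ⟨z, rfl⟩, rfl⟩
      exact ⟨g z, hρg z⟩
    · intro x hx
      have hxfix : ρ x = x := (hfix x).mp hx
      refine ⟨ρ (ug x), ⟨ug x, rfl⟩, ?_⟩
      calc g (ρ (ug x)) = ρ (g (ug x)) := (hρg _).symm
        _ = ρ (ρ x) := by rw [hgu]
        _ = ρ x := hρρ x
        _ = x := hxfix
  · -- f isometry on M
    intro x hx y hy
    have hx' : ρ x = x := (hfix x).mp hx
    have hy' : ρ y = y := (hfix y).mp hy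
    refine le_antisymm (fdist x y) ?_
    have h1 : Tendsto (fun s => dist (T s x) (T s y)) (↑U) (𝓝 (dist (ρ x) (ρ y))) :=
      (hρ x).dist (hρ y)
    rw [hx', hy'] at h1
    refine le_of_tendsto h1 ?_
    filter_upwards [hUFS] with s hs
    obtain ⟨h1s, -, -⟩ := hFS0 s hs
    obtain ⟨p, hp⟩ : ∃ p, s.1 = p + 1 := ⟨s.1 - 1, by omega⟩
    have hx2 : T s x = T (s.1 - 1, s.2) (f x) := by
      show f^[s.1] (g^[s.2] x) = f^[s.1 - 1] (g^[s.2] (f x))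
      rw [hp]
      simp only [Nat.add_sub_cancel]
      rw [Function.iterate_succ_apply f p, (hc.iterate_right s.2) x]
    have hy2 : T s y = T (s.1 - 1, s.2) (f y) := by
      show f^[s.1] (g^[s.2] y) = f^[s.1 - 1] (g^[s.2] (f y))
      rw [hp]
      simp only [Nat.add_sub_cancel]
      rw [Function.iterate_succ_apply f p, (hc.iterate_right s.2) y]
    rw [hx2, hy2]
    exact Tdist _ _ _
  · -- g isometry on M
    intro x hx y hy
    have hx' : ρ x = x := (hfix x).mp hx
    have hy' : ρ y = y := (hfix y).mp hy
    have hgd : dist (g x) (g y) ≤ dist x y := by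
      simpa using hg.dist_le_mul x y
    refine le_antisymm hgd ?_
    have h1 : Tendsto (fun s => dist (T s x) (T s y)) (↑U) (𝓝 (dist (ρ x) (ρ y))) :=
      (hρ x).dist (hρ y)
    rw [hx', hy'] at h1
    refine le_of_tendsto h1 ?_
    filter_upwards [hUFS] with s hs
    obtain ⟨-, h2s, -⟩ := hFS0 s hs
    obtain ⟨p, hp⟩ : ∃ p, s.2 = p + 1 := ⟨s.2 - 1, by omega⟩
    have hx2 : T s x = T (s.1, s.2 - 1) (g x) := by
      show f^[s.1] (g^[s.2] x) = f^[s.1] (g^[s.2 - 1] (g x))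
      rw [hp]
      simp only [Nat.add_sub_cancel]
      rw [Function.iterate_succ_apply g p]
    have hy2 : T s y = T (s.1, s.2 - 1) (g y) := by
      show f^[s.1] (g^[s.2] y) = f^[s.1] (g^[s.2 - 1] (g y))
      rw [hp]
      simp only [Nat.add_sub_cancel]
      rw [Function.iterate_succ_apply g p]
    rw [hx2, hy2]
    exact Tdist _ _ _
  · -- totally geodesic
    intro x hx y hy
    have hx' : ρ x = x := (hfix x).mp hx
    have hy' : ρ y = y := (hfix y).mp hy
    obtain ⟨γ, a, b, ⟨hab, hgeod⟩, hga, hgb⟩ := hgeo x y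
    have hmema : a ∈ Set.Icc a b := ⟨le_refl a, hab⟩
    have hmemb : b ∈ Set.Icc a b := ⟨hab, le_refl b⟩
    have hdxy : dist x y = b - a := by
      rw [← hga, ← hgb, hgeod a hmema b hmemb, abs_of_nonpos (by linarith)]
      ring
    have key : ∀ s ∈ Set.Icc a b, ∀ t ∈ Set.Icc a b, s ≤ t →
        dist (ρ (γ s)) (ρ (γ t)) = t - s := by
      intro s hs t ht hst
      have h1 : dist x (ρ (γ s)) ≤ s - a := by
        have := hρdist (γ a) (γ s)
        rw [hga] at this
        rw [← hx']
        calc dist (ρ x) (ρ (γ s)) = dist (ρ (γ a)) (ρ (γ s)) := by rw [hga]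
          _ ≤ dist (γ a) (γ s) := hρdist _ _
          _ = |a - s| := hgeod a hmema s hs
          _ = s - a := by rw [abs_of_nonpos (by linarith [hs.1])]; ring
      have h2 : dist (ρ (γ s)) (ρ (γ t)) ≤ t - s := by
        calc dist (ρ (γ s)) (ρ (γ t)) ≤ dist (γ s) (γ t) := hρdist _ _
          _ = |s - t| := hgeod s hs t ht
          _ = t - s := by rw [abs_of_nonpos (by linarith)]; ring
      have h3 : dist (ρ (γ t)) y ≤ b - t := by
        rw [← hy']
        calc dist (ρ (γ t)) (ρ y) = dist (ρ (γ t)) (ρ (γ b)) := by rw [hgb]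
          _ ≤ dist (γ t) (γ b) := hρdist _ _
          _ = |t - b| := hgeod t ht b hmemb
          _ = b - t := by rw [abs_of_nonpos (by linarith [ht.2])]; ring
      have h4 : dist x y ≤ dist x (ρ (γ s)) + dist (ρ (γ s)) (ρ (γ t)) + dist (ρ (γ t)) y :=
        dist_triangle4 _ _ _ _
      rw [hdxy] at h4
      linarith
    refine ⟨ρ ∘ γ, a, b, ⟨hab, ?_⟩, ?_, ?_, ?_⟩
    · intro s hs t ht
      rcases le_total s t with hst | hst
      · rw [Function.comp_apply, Function.comp_apply, key s hs t ht hst,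
          abs_of_nonpos (by linarith)]
        ring
      · rw [Function.comp_apply, Function.comp_apply, dist_comm,
          key t ht s hs hst, abs_of_nonneg (by linarith)]
    · show ρ (γ a) = x
      rw [hga, hx']
    · show ρ (γ b) = y
      rw [hgb, hy']
    · intro t ht
      exact ⟨γ t, rfl⟩
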